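/- Let r ≥ 1 be an integer and let a_1, …, a_r be pairwise distinct nonnegative real numbers. Then the sum over all ordered pairs (i,j) with 1 ≤ i, j ≤ r and i ≠ j of tanh(a_i)·(coth(a_i − a_j) + coth(a_i + a_j)) equals r(r−1). -/

import Mathlib

noncomputable def coth (x : ℝ) : ℝ := Real.cosh x / Real.sinh x

lemma key (x y : ℝ) (hxy : x ≠ y) (hxy2 : x + y ≠ 0) :
    Real.tanh x * (coth (x - y) + coth (x + y)) +
    Real.tanh y * (coth (y - x) + coth (y + x)) = 2 := by
  have h1 : Real.sinh (x - y) ≠ 0 := by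
    simpa [Real.sinh_eq_zero, sub_eq_zero] using hxy
  have h2 : Real.sinh (x + y) ≠ 0 := by
    simpa [Real.sinh_eq_zero] using hxy2
  have h3 : Real.sinh (y - x) ≠ 0 := by
    simpa [Real.sinh_eq_zero, sub_eq_zero] using (Ne.symm hxy)
  have hc1 : Real.cosh x ≠ 0 := (Real.cosh_pos x).ne'
  have hc2 : Real.cosh y ≠ 0 := (Real.cosh_pos y).ne'
  have e1 := Real.cosh_sq_sub_sinh_sq x
  have e2 := Real.cosh_sq_sub_sinh_sq y
  simp only [coth, Real.tanh_eq_sinh_div_cosh, Real.sinh_sub, Real.cosh_sub,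
    Real.sinh_add, Real.cosh_add, add_comm y x] at *
  have h3' : Real.cosh x * Real.sinh y - Real.sinh x * Real.cosh y ≠ 0 := by
    intro h; exact h1 (by linarith)
  field_simp
  nlinarith [sq_nonneg (Real.sinh x), sq_nonneg (Real.sinh y), e1, e2,
    sq_nonneg (Real.cosh x * Real.cosh y)]

theorem sum_tanh_coth_pairs (r : ℕ) (hr : 1 ≤ r) (a : Fin r → ℝ)
    (ha : ∀ i, 0 ≤ a i) (hinj : Function.Injective a) :
    ∑ i : Fin r, ∑ j ∈ Finset.univ.filter (fun j => j ≠ i),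
      Real.tanh (a i) * (coth (a i - a j) + coth (a i + a j))
      = (r : ℝ) * ((r : ℝ) - 1) := by
  set F : Fin r → Fin r → ℝ := fun i j =>
    Real.tanh (a i) * (coth (a i - a j) + coth (a i + a j)) with hF
  have hswap : ∑ i : Fin r, ∑ j ∈ Finset.univ.filter (fun j => j ≠ i), F j i
      = ∑ i : Fin r, ∑ j ∈ Finset.univ.filter (fun j => j ≠ i), F i j := by
    rw [Finset.sum_comm' (s' := fun j => Finset.univ.filter (fun i => i ≠ j))
      (t := fun i => Finset.univ.filter (fun j => j ≠ i)) (t' := Finset.univ)]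
    intro x y
    simp [ne_comm, eq_comm]
  have hkey : ∀ i j : Fin r, j ≠ i → F i j + F j i = 2 := by
    intro i j hji
    apply key
    · exact fun h => hji (hinj h).symm
    · have hne : a i ≠ a j := fun h => hji (hinj h).symm
      have hpos : 0 < a i + a j := by
        rcases (ha i).lt_or_eq with h | h
        · linarith [ha j]
        · have : 0 < a j := (ha j).lt_of_ne (fun e => hne (h.symm.trans e))
          linarith
      exact hpos.ne'
  have h2 : (2:ℝ) * ∑ i : Fin r, ∑ j ∈ Finset.univ.filter (fun j => j ≠ i), F i j
      = (2:ℝ) * ((r:ℝ) * ((r:ℝ) - 1)) := by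
    calc (2:ℝ) * ∑ i : Fin r, ∑ j ∈ Finset.univ.filter (fun j => j ≠ i), F i j
        = (∑ i : Fin r, ∑ j ∈ Finset.univ.filter (fun j => j ≠ i), F i j)
          + ∑ i : Fin r, ∑ j ∈ Finset.univ.filter (fun j => j ≠ i), F j i := by
          rw [hswap]; ring
      _ = ∑ i : Fin r, ∑ j ∈ Finset.univ.filter (fun j => j ≠ i), (F i j + F j i) := by
          rw [← Finset.sum_add_distrib]
          exact Finset.sum_congr rfl fun i _ => (Finset.sum_add_distrib).symm
      _ = ∑ i : Fin r, ∑ j ∈ Finset.univ.filter (fun j => j ≠ i), (2:ℝ) := by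
          refine Finset.sum_congr rfl fun i _ => Finset.sum_congr rfl fun j hj => ?_
          exact hkey i j (Finset.mem_filter.mp hj).2
      _ = ∑ i : Fin r, ((r:ℝ) - 1) * 2 := by
          refine Finset.sum_congr rfl fun i _ => ?_
          rw [Finset.sum_const, Finset.filter_ne', Finset.card_erase_of_mem (Finset.mem_univ i),
            Finset.card_univ, Fintype.card_fin]
          rw [nsmul_eq_mul, Nat.cast_sub hr]
          push_cast
          ring
      _ = (2:ℝ) * ((r:ℝ) * ((r:ℝ) - 1)) := by
          rw [Finset.sum_const, Finset.card_univ, Fintype.card_fin]; ring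
  linarith
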